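/- For every positive integer n, H_n = (-1)^{n+1} · Σ_{k=0}^{n-1} (-1)^k·C(n,k)/(n-k), where C(n,k) is the binomial coefficient. -/
import Mathlib


/-- Harmonic number `H_n = 1 + 1/2 + ⋯ + 1/n`, `H_0 = 0`. -/
noncomputable def H (n : ℕ) : ℝ := ∑ k ∈ Finset.range n, (1 : ℝ) / (k + 1)

lemma alt_choose_succ (n : ℕ) :
    ∑ k ∈ Finset.range (n + 1), (-1 : ℝ) ^ k * ((n + 1).choose (k + 1) : ℝ) = 1 := by
  have h0 : ∑ i ∈ Finset.range (n + 2), (-1 : ℝ) ^ i * ((n + 1).choose i : ℝ) = 0 := by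
    have := Int.alternating_sum_range_choose (n := n + 1)
    have h : ((∑ i ∈ Finset.range (n + 2), (-1 : ℤ) ^ i * ((n + 1).choose i : ℤ) : ℤ) : ℝ)
        = 0 := by rw [this]; simp
    push_cast at h
    convert h using 2
  rw [Finset.sum_range_succ'] at h0
  have h1 : ∑ i ∈ Finset.range (n + 1), (-1 : ℝ) ^ (i + 1) * ((n + 1).choose (i + 1) : ℝ)
      = -1 := by
    simp only [Nat.choose_zero_right, pow_zero, Nat.cast_one, one_mul] at h0
    linarith
  have h2 : ∑ i ∈ Finset.range (n + 1), (-1 : ℝ) ^ (i + 1) * ((n + 1).choose (i + 1) : ℝ)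
      = -∑ k ∈ Finset.range (n + 1), (-1 : ℝ) ^ k * ((n + 1).choose (k + 1) : ℝ) := by
    rw [← Finset.sum_neg_distrib]
    apply Finset.sum_congr rfl
    intro i _
    rw [pow_succ]
    ring
  rw [h2] at h1
  linarith

lemma aux (n : ℕ) :
    ∑ k ∈ Finset.range n, (-1 : ℝ) ^ k * (n.choose (k + 1) : ℝ) / (k + 1) = H n := by
  induction n with
  | zero => simp [H]
  | succ n ih =>
    have split : ∀ k ∈ Finset.range (n + 1),
        (-1 : ℝ) ^ k * ((n + 1).choose (k + 1) : ℝ) / (k + 1)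
        = (-1 : ℝ) ^ k * ((n + 1).choose (k + 1) : ℝ) / (n + 1)
          + (-1 : ℝ) ^ k * (n.choose (k + 1) : ℝ) / (k + 1) := by
      intro k _
      have hc : ((n + 1) : ℝ) * (n.choose k : ℝ) = ((n + 1).choose (k + 1) : ℝ) * (k + 1) := by
        have := Nat.add_one_mul_choose_eq n k
        exact_mod_cast congrArg (Nat.cast : ℕ → ℝ) this
      have hsplit : ((n + 1).choose (k + 1) : ℝ) = (n.choose k : ℝ) + (n.choose (k + 1) : ℝ) := by
        rw [Nat.choose_succ_succ]; push_cast; ring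
      have hk1 : ((k : ℝ) + 1) ≠ 0 := by positivity
      have hn1 : ((n : ℝ) + 1) ≠ 0 := by positivity
      have hdiv : ((n + 1).choose (k + 1) : ℝ) / (n + 1) = (n.choose k : ℝ) / (k + 1) := by
        rw [div_eq_div_iff hn1 hk1]
        linarith [hc]
      rw [mul_div_assoc, mul_div_assoc ((-1 : ℝ) ^ k) _ ((n : ℝ) + 1), hdiv, hsplit]
      ring
    rw [Finset.sum_congr rfl split, Finset.sum_add_distrib]
    have hA : ∑ k ∈ Finset.range (n + 1), (-1 : ℝ) ^ k * ((n + 1).choose (k + 1) : ℝ) / (n + 1)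
        = 1 / (n + 1) := by
      rw [← Finset.sum_div, alt_choose_succ]
    have hB : ∑ k ∈ Finset.range (n + 1), (-1 : ℝ) ^ k * (n.choose (k + 1) : ℝ) / (k + 1)
        = H n := by
      rw [Finset.sum_range_succ, Nat.choose_succ_self]
      simpa using ih
    have hH : H (n + 1) = H n + 1 / (n + 1) := by
      simp [H, Finset.sum_range_succ]
    rw [hA, hB, hH]
    ring

theorem harmonic_eq_alternating_sum (n : ℕ) (hn : 0 < n) :
    H n = (-1 : ℝ) ^ (n + 1) *
      ∑ k ∈ Finset.range n, (-1 : ℝ) ^ k * (n.choose k : ℝ) / ((n : ℝ) - k) := by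
  rw [← aux n, ← Finset.sum_range_reflect, Finset.mul_sum]
  apply Finset.sum_congr rfl
  intro k hk
  simp only [Finset.mem_range] at hk
  have hkn : k + 1 ≤ n := hk
  have hidx : n - 1 - k + 1 = n - k := by omega
  have hch : (n.choose (n - 1 - k + 1) : ℝ) = (n.choose k : ℝ) := by
    rw [hidx, Nat.choose_symm hk.le]
  have hcast : ((n - 1 - k : ℕ) : ℝ) = (n : ℝ) - 1 - k := by
    have h := Nat.cast_sub (by omega : 1 + k ≤ n) (R := ℝ)
    rw [show n - 1 - k = n - (1 + k) by omega, h]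
    push_cast
    ring
  have hc2 : ((n - 1 - k : ℕ) : ℝ) + 1 = (n : ℝ) - k := by rw [hcast]; ring
  have hsign : (-1 : ℝ) ^ (n - 1 - k) = (-1 : ℝ) ^ (n + 1) * (-1 : ℝ) ^ k := by
    rw [← pow_add, show n + 1 + k = n - 1 - k + 2 * (k + 1) by omega, pow_add, pow_mul,
      neg_one_sq, one_pow, mul_one]
  rw [hch, hc2, hsign]
  ring
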